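/- Suppose ℓ satisfies the Metric Loss Assumption and Y is a finite label set. Suppose the Close Conditionals assumption CC(κ) does NOT hold for the hypothesis class H, i.e., for every f ∈ H, κ ≤ R_p(f) + max_{y ∈ Y} W_{1,ℓ}(f#p_{x|y}(·|y), f#q_{x|y}(·|y)). Then for every f ∈ H, κ · q_y(y_min) ≤ R_p(f) · q_y(y_max) + R_q(f) + R_r(f), where y_min = argmin_y q_y(y), y_max = argmax_y q_y(y), and r is the probability measure on X × Y given by r(x, y) = p_{x|y}(x|y) · q_y(y). -/

import Mathlib

open MeasureTheory ProbabilityTheory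

/-- A coupling of `μ` and `ν`: a joint measure on the product with the given marginals. -/
def IsCoupling {A B : Type*} [MeasurableSpace A] [MeasurableSpace B]
    (γ : Measure (A × B)) (μ : Measure A) (ν : Measure B) : Prop :=
  γ.map Prod.fst = μ ∧ γ.map Prod.snd = ν

/-- The `α`-Wasserstein distance between `μ` and `ν` with cost function `c`:
`W_{α,c}(μ,ν) = (inf_{γ ∈ Γ(μ,ν)} ∫ c^α dγ)^{1/α}`. -/
noncomputable def Wass {A B : Type*} [MeasurableSpace A] [MeasurableSpace B]
    (α : ℝ) (c : A × B → ℝ) (μ : Measure A) (ν : Measure B) : ℝ :=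
  sInf { r | ∃ γ : Measure (A × B), IsCoupling γ μ ν ∧ r = ∫ z, c z ^ α ∂γ } ^ (1 / α)

/-- The 1-Wasserstein distance between `μ` and `ν` with cost function `c`. -/
noncomputable def W1 {A B : Type*} [MeasurableSpace A] [MeasurableSpace B]
    (c : A × B → ℝ) (μ : Measure A) (ν : Measure B) : ℝ :=
  sInf { r | ∃ γ : Measure (A × B), IsCoupling γ μ ν ∧ r = ∫ z, c z ∂γ }

/-- The risk of classifier `f` under joint distribution `p`, w.r.t. loss `ℓ`. -/
noncomputable def risk {X Y : Type*} [MeasurableSpace X] [MeasurableSpace Y]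
    (ℓ : Y × Y → ℝ) (f : X → Y) (p : Measure (X × Y)) : ℝ :=
  ∫ z, ℓ (f z.1, z.2) ∂p

/-- `f#p` : pushforward of a joint measure `p` under `(x, y) ↦ (f x, y)`. -/
noncomputable def jmap {X Y : Type*} [MeasurableSpace X] [MeasurableSpace Y]
    (f : X → Y) (p : Measure (X × Y)) : Measure (Y × Y) :=
  p.map (fun z => (f z.1, z.2))

instance jmap.instIsFiniteMeasure {X Y : Type*} [MeasurableSpace X] [MeasurableSpace Y]
    (f : X → Y) (p : Measure (X × Y)) [IsFiniteMeasure p] : IsFiniteMeasure (jmap f p) := by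
  unfold jmap; infer_instance

section Aux

variable {Y : Type*} [MeasurableSpace Y] [Fintype Y] [MeasurableSingletonClass Y] [Nonempty Y]

/-- Any bounded measurable real function is integrable w.r.t. a finite measure. -/
lemma aux_integrable_of_bdd {Z : Type*} [MeasurableSpace Z] (μ : Measure Z) [IsFiniteMeasure μ]
    {g : Z → ℝ} (hg : Measurable g) (M : ℝ) (hb : ∀ z, |g z| ≤ M) : Integrable g μ :=
  (integrable_const M).mono' hg.aestronglyMeasurable (ae_of_all _ hb)

/-- W1 is nonnegative when the cost is nonnegative. -/
lemma aux_W1_nonneg {A B : Type*} [MeasurableSpace A] [MeasurableSpace B]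
    (c : A × B → ℝ) (hc : ∀ z, 0 ≤ c z) (μ : Measure A) (ν : Measure B) :
    0 ≤ W1 c μ ν := by
  apply Real.sInf_nonneg
  rintro r ⟨γ, -, rfl⟩
  exact integral_nonneg hc

/-- The product-coupling bound for W1 with a triangle-inequality cost. -/
lemma aux_W1_le (ℓ : Y × Y → ℝ) (hℓmeas : Measurable ℓ)
    (hnonneg : ∀ y y' : Y, 0 ≤ ℓ (y, y'))
    (htri : ∀ y₁ y₂ y₃ : Y, ℓ (y₁, y₃) ≤ ℓ (y₁, y₂) + ℓ (y₂, y₃))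
    (μ ν : Measure Y) [IsProbabilityMeasure μ] [IsProbabilityMeasure ν] (y : Y) :
    W1 ℓ μ ν ≤ (∫ a, ℓ (a, y) ∂μ) + ∫ b, ℓ (y, b) ∂ν := by
  obtain ⟨z₀, hz₀⟩ := Finite.exists_max ℓ
  set M := ℓ z₀ with hM
  have hbd : ∀ z : Y × Y, |ℓ z| ≤ M := fun z => by
    rw [abs_of_nonneg (hnonneg z.1 z.2)]; exact hz₀ z
  have hint : ∀ (m : Measure (Y × Y)) [IsFiniteMeasure m], Integrable ℓ m :=
    fun m _ => aux_integrable_of_bdd m hℓmeas M hbd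
  have i1 : Integrable (fun z : Y × Y => ℓ (z.1, y)) (μ.prod ν) :=
    aux_integrable_of_bdd _
      (by exact hℓmeas.comp (measurable_fst.prodMk measurable_const)) M (fun z => hbd _)
  have i2 : Integrable (fun z : Y × Y => ℓ (y, z.2)) (μ.prod ν) :=
    aux_integrable_of_bdd _
      (by exact hℓmeas.comp (measurable_const.prodMk measurable_snd)) M (fun z => hbd _)
  have h1 : W1 ℓ μ ν ≤ ∫ z, ℓ z ∂(μ.prod ν) := by
    apply csInf_le
    · refine ⟨0, ?_⟩
      rintro r ⟨γ, -, rfl⟩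
      exact integral_nonneg fun z => hnonneg z.1 z.2
    · exact ⟨μ.prod ν, ⟨by simp [Measure.map_fst_prod], by simp [Measure.map_snd_prod]⟩, rfl⟩
  refine h1.trans ?_
  have h2 : ∫ z, ℓ z ∂(μ.prod ν) ≤ ∫ z : Y × Y, (ℓ (z.1, y) + ℓ (y, z.2)) ∂(μ.prod ν) := by
    apply integral_mono (hint _) (i1.add i2)
    intro z
    exact htri z.1 y z.2
  refine h2.trans_eq ?_
  rw [integral_add i1 i2]
  congr 1
  · rw [integral_prod _ i1]
    simp
  · rw [integral_prod _ i2]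
    simp

/-- Risk of a swapped composition-product, as a finite sum. -/
lemma aux_risk_compProd {X : Type*} [MeasurableSpace X]
    (ℓ : Y × Y → ℝ) (hℓmeas : Measurable ℓ)
    (hnonneg : ∀ y y' : Y, 0 ≤ ℓ (y, y'))
    {f : X → Y} (hf : Measurable f)
    (μ : Measure Y) [IsProbabilityMeasure μ]
    (κ : ProbabilityTheory.Kernel Y X) [IsMarkovKernel κ] :
    risk ℓ f ((μ ⊗ₘ κ).map Prod.swap)
      = ∑ y : Y, (μ {y}).toReal * ∫ x, ℓ (f x, y) ∂(κ y) := by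
  obtain ⟨z₀, hz₀⟩ := Finite.exists_max ℓ
  set M := ℓ z₀ with hM
  have hbd : ∀ z : Y × Y, |ℓ z| ≤ M := fun z => by
    rw [abs_of_nonneg (hnonneg z.1 z.2)]; exact hz₀ z
  have hmeas2 : Measurable fun w : Y × X => ℓ (f w.2, w.1) := by
    exact hℓmeas.comp ((hf.comp measurable_snd).prodMk measurable_fst)
  have hmeasXY : Measurable fun z : X × Y => ℓ (f z.1, z.2) := by
    exact hℓmeas.comp ((hf.comp measurable_fst).prodMk measurable_snd)
  have hint : Integrable (fun w : Y × X => ℓ (f w.2, w.1)) (μ ⊗ₘ κ) :=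
    aux_integrable_of_bdd _ hmeas2 M (fun z => hbd _)
  have hstep : risk ℓ f ((μ ⊗ₘ κ).map Prod.swap)
      = ∫ w : Y × X, ℓ (f w.2, w.1) ∂(μ ⊗ₘ κ) := by
    rw [risk, integral_map measurable_swap.aemeasurable hmeasXY.aestronglyMeasurable]
    simp
  rw [hstep, Measure.integral_compProd hint]
  rw [integral_fintype ?_]
  · simp [smul_eq_mul, Measure.real]
  · -- integrability of y ↦ ∫ x, ℓ (f x, y) ∂κ y over finite Y
    apply aux_integrable_of_bdd _ ?_ M
    · intro y
      calc |∫ x, ℓ (f x, y) ∂(κ y)| ≤ ∫ x, |ℓ (f x, y)| ∂(κ y) := by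
            simpa [Real.norm_eq_abs] using
              norm_integral_le_integral_norm (fun x => ℓ (f x, y)) (μ := κ y)
        _ ≤ ∫ _x, M ∂(κ y) := by
            apply integral_mono
            · exact (aux_integrable_of_bdd _
                (by exact hℓmeas.comp (hf.prodMk measurable_const)) M (fun z => hbd _)).abs
            · exact integrable_const M
            · exact fun x => hbd _
        _ = M := by simp
    · exact (hmeas2.stronglyMeasurable.integral_kernel_prod_right' (κ := κ)).measurable

end Aux

theorem statement10 {X Y : Type*} [MeasurableSpace X] [StandardBorelSpace X] [Nonempty X]
    [MeasurableSpace Y] [Fintype Y] [MeasurableSingletonClass Y] [Nonempty Y]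
    (ℓ : Y × Y → ℝ) (hℓmeas : Measurable ℓ)
    (hsymm : ∀ y y' : Y, ℓ (y, y') = ℓ (y', y))
    (hnonneg : ∀ y y' : Y, 0 ≤ ℓ (y, y'))
    (htri : ∀ y₁ y₂ y₃ : Y, ℓ (y₁, y₃) ≤ ℓ (y₁, y₂) + ℓ (y₂, y₃))
    (hid : ∀ y y' : Y, ℓ (y, y') = 0 ↔ y = y')
    (p q : Measure (X × Y)) [IsProbabilityMeasure p] [IsProbabilityMeasure q]
    (H : Set (X → Y)) (hH : ∀ f ∈ H, Measurable f)
    (κ : ℝ) (hκ : 0 < κ)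
    (hnotCC : ∀ f ∈ H, κ ≤ risk ℓ f p +
      ⨆ y : Y, W1 ℓ (((p.map Prod.swap).condKernel y).map f)
        (((q.map Prod.swap).condKernel y).map f))
    (ymin ymax : Y)
    (hymin : ∀ y : Y, (q.map Prod.snd) {ymin} ≤ (q.map Prod.snd) {y})
    (hymax : ∀ y : Y, (q.map Prod.snd) {y} ≤ (q.map Prod.snd) {ymax}) :
    ∀ f ∈ H,
      κ * ((q.map Prod.snd) {ymin}).toReal ≤
        risk ℓ f p * ((q.map Prod.snd) {ymax}).toReal + risk ℓ f q +
          risk ℓ f (((q.map Prod.snd) ⊗ₘ (p.map Prod.swap).condKernel).map Prod.swap) := by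
  intro f hf
  have hfm : Measurable f := hH f hf
  have hswap : IsProbabilityMeasure (p.map Prod.swap) := Measure.isProbabilityMeasure_map
    measurable_swap.aemeasurable
  have hswapq : IsProbabilityMeasure (q.map Prod.swap) := Measure.isProbabilityMeasure_map
    measurable_swap.aemeasurable
  have hqsnd : IsProbabilityMeasure (q.map Prod.snd) := Measure.isProbabilityMeasure_map
    measurable_snd.aemeasurable
  -- abbreviations
  set κp := (p.map Prod.swap).condKernel with hκp
  set κq := (q.map Prod.swap).condKernel with hκq
  set qy := q.map (Prod.snd : X × Y → Y) with hqy
  -- marginal decompositions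
  have hfstq : (q.map Prod.swap).map Prod.fst = qy := by
    rw [Measure.map_map measurable_fst measurable_swap]
    rfl
  have hqdec : (qy ⊗ₘ κq).map Prod.swap = q := by
    have h := Measure.disintegrate (q.map Prod.swap) (q.map Prod.swap).condKernel
    have hfst : (q.map Prod.swap).fst = qy := hfstq
    rw [hκq, ← hfst, h, Measure.map_map measurable_swap measurable_swap]
    simp [Function.comp_def, Prod.swap_swap, Measure.map_id]
  -- per-label conditional measures
  have hμy : ∀ y : Y, IsProbabilityMeasure ((κp y).map f) :=
    fun y => Measure.isProbabilityMeasure_map hfm.aemeasurable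
  have hνy : ∀ y : Y, IsProbabilityMeasure ((κq y).map f) :=
    fun y => Measure.isProbabilityMeasure_map hfm.aemeasurable
  -- risk decompositions as finite sums
  have hriskr : risk ℓ f ((qy ⊗ₘ κp).map Prod.swap)
      = ∑ y : Y, (qy {y}).toReal * ∫ x, ℓ (f x, y) ∂(κp y) :=
    aux_risk_compProd ℓ hℓmeas hnonneg hfm qy κp
  have hriskq : risk ℓ f q = ∑ y : Y, (qy {y}).toReal * ∫ x, ℓ (f x, y) ∂(κq y) := by
    conv_lhs => rw [← hqdec]
    exact aux_risk_compProd ℓ hℓmeas hnonneg hfm qy κq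
  -- W1 bound per label
  have hW1le : ∀ y : Y, W1 ℓ ((κp y).map f) ((κq y).map f)
      ≤ (∫ x, ℓ (f x, y) ∂(κp y)) + ∫ x, ℓ (f x, y) ∂(κq y) := by
    intro y
    have hm1 : Measurable fun a : Y => ℓ (a, y) := by
      exact hℓmeas.comp (measurable_id.prodMk measurable_const)
    have hm2 : Measurable fun b : Y => ℓ (y, b) := by
      exact hℓmeas.comp (measurable_const.prodMk measurable_id)
    have := aux_W1_le ℓ hℓmeas hnonneg htri ((κp y).map f) ((κq y).map f) y
    rw [integral_map hfm.aemeasurable hm1.aestronglyMeasurable,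
      integral_map hfm.aemeasurable hm2.aestronglyMeasurable] at this
    simpa [hsymm] using this
  have hW1nonneg : ∀ y : Y, 0 ≤ W1 ℓ ((κp y).map f) ((κq y).map f) :=
    fun y => aux_W1_nonneg ℓ (fun z => hnonneg z.1 z.2) _ _
  -- choose the maximizing label
  obtain ⟨y₀, hy₀⟩ := Finite.exists_max
    (fun y : Y => W1 ℓ ((κp y).map f) ((κq y).map f))
  have hsup : (⨆ y : Y, W1 ℓ ((κp y).map f) ((κq y).map f))
      ≤ W1 ℓ ((κp y₀).map f) ((κq y₀).map f) := ciSup_le hy₀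
  -- key chain: qmin * sup_y W1_y ≤ risk_q + risk_r
  have hqnn : ∀ y : Y, (0:ℝ) ≤ (qy {y}).toReal := fun y => ENNReal.toReal_nonneg
  have hIpnn : ∀ y : Y, (0:ℝ) ≤ ∫ x, ℓ (f x, y) ∂(κp y) :=
    fun y => integral_nonneg fun x => hnonneg _ _
  have hIqnn : ∀ y : Y, (0:ℝ) ≤ ∫ x, ℓ (f x, y) ∂(κq y) :=
    fun y => integral_nonneg fun x => hnonneg _ _
  have hterm : (qy {y₀}).toReal * W1 ℓ ((κp y₀).map f) ((κq y₀).map f)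
      ≤ risk ℓ f q + risk ℓ f ((qy ⊗ₘ κp).map Prod.swap) := by
    calc (qy {y₀}).toReal * W1 ℓ ((κp y₀).map f) ((κq y₀).map f)
        ≤ (qy {y₀}).toReal * ((∫ x, ℓ (f x, y₀) ∂(κp y₀)) + ∫ x, ℓ (f x, y₀) ∂(κq y₀)) :=
          mul_le_mul_of_nonneg_left (hW1le y₀) (hqnn y₀)
      _ = (qy {y₀}).toReal * (∫ x, ℓ (f x, y₀) ∂(κq y₀))
          + (qy {y₀}).toReal * (∫ x, ℓ (f x, y₀) ∂(κp y₀)) := by ring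
      _ ≤ (∑ y : Y, (qy {y}).toReal * ∫ x, ℓ (f x, y) ∂(κq y))
          + ∑ y : Y, (qy {y}).toReal * ∫ x, ℓ (f x, y) ∂(κp y) := by
          gcongr
          · exact Finset.single_le_sum
              (fun y _ => mul_nonneg (hqnn y) (hIqnn y)) (Finset.mem_univ y₀)
          · exact Finset.single_le_sum
              (fun y _ => mul_nonneg (hqnn y) (hIpnn y)) (Finset.mem_univ y₀)
      _ = risk ℓ f q + risk ℓ f ((qy ⊗ₘ κp).map Prod.swap) := by rw [hriskq, hriskr]
  have hminle : (qy {ymin}).toReal ≤ (qy {y₀}).toReal :=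
    ENNReal.toReal_mono (measure_ne_top _ _) (hymin y₀)
  have hminmax : (qy {ymin}).toReal ≤ (qy {ymax}).toReal :=
    ENNReal.toReal_mono (measure_ne_top _ _) ((hymin ymax).trans (hymax ymax))
  have hriskpnn : 0 ≤ risk ℓ f p := integral_nonneg fun z => hnonneg _ _
  have hκle := hnotCC f hf
  calc κ * (qy {ymin}).toReal
      ≤ (risk ℓ f p + ⨆ y : Y, W1 ℓ ((κp y).map f) ((κq y).map f)) * (qy {ymin}).toReal :=
        mul_le_mul_of_nonneg_right hκle (hqnn ymin)
    _ = risk ℓ f p * (qy {ymin}).toReal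
        + (qy {ymin}).toReal * ⨆ y : Y, W1 ℓ ((κp y).map f) ((κq y).map f) := by ring
    _ ≤ risk ℓ f p * (qy {ymax}).toReal
        + (qy {y₀}).toReal * W1 ℓ ((κp y₀).map f) ((κq y₀).map f) :=
        add_le_add (mul_le_mul_of_nonneg_left hminmax hriskpnn)
          ((mul_le_mul_of_nonneg_left hsup (hqnn ymin)).trans
            (mul_le_mul_of_nonneg_right hminle (hW1nonneg y₀)))
    _ ≤ risk ℓ f p * (qy {ymax}).toReal
        + (risk ℓ f q + risk ℓ f ((qy ⊗ₘ κp).map Prod.swap)) := by gcongr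
    _ = risk ℓ f p * (qy {ymax}).toReal + risk ℓ f q
        + risk ℓ f ((qy ⊗ₘ κp).map Prod.swap) := by ring
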